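/- If the power series ∑ cₙ ⋆ (z − z₀)ⁿ converges for all z with ‖z − z₀‖ < R (for some R > 0), then limsup_{n→∞} ‖cₙ‖^{1/n} ≤ ‖1‖/R, where 1 is the unit of A. -/
import Mathlib


open Filter Finset Topology

/-- `apow mul one z n` is the `n`-th power `zⁿ` in the algebra: `z⁰ = 1`,
`z^(k+1) = z^k ⋆ z`. -/
def apow {A : Type*} [AddCommGroup A] [Module ℝ A]
    (mul : A →ₗ[ℝ] A →ₗ[ℝ] A) (one : A) (z : A) : ℕ → A
  | 0 => one
  | n + 1 => mul (apow mul one z n) z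

/-- If the power series `∑ cₙ ⋆ (z - z₀)ⁿ` converges for all `z`
with `‖z - z₀‖ < R` (some `R > 0`), then `limsup ‖cₙ‖^(1/n) ≤ ‖1‖/R`, where `1`
is the unit of the algebra. -/
theorem stmt8_limsup_bound {A : Type*} [NormedAddCommGroup A] [NormedSpace ℝ A]
    [FiniteDimensional ℝ A]
    (mul : A →ₗ[ℝ] A →ₗ[ℝ] A) (one : A)
    (hone : ∀ x : A, mul one x = x ∧ mul x one = x)
    (hassoc : ∀ x y z : A, mul (mul x y) z = mul x (mul y z))
    (m : ℝ) (hm : 0 < m)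
    (hsub : ∀ x y : A, ‖mul x y‖ ≤ m * ‖x‖ * ‖y‖)
    (c : ℕ → A) (z₀ : A) (R : ℝ) (hR : 0 < R)
    (hconv : ∀ z : A, ‖z - z₀‖ < R →
      ∃ S : A, Tendsto
        (fun N => ∑ k ∈ Finset.range N, mul (c k) (apow mul one (z - z₀) k))
        atTop (𝓝 S)) :
    Filter.limsup (fun n => ENNReal.ofReal (‖c n‖ ^ (1 / (n : ℝ)))) atTop ≤
      ENNReal.ofReal (‖one‖ / R) := by
  by_cases hone0 : one = 0
  · -- trivial algebra: every `c n = 0`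
    have hc : ∀ n, c n = 0 := by
      intro n
      have h := (hone (c n)).2
      rw [hone0, (mul (c n)).map_zero] at h
      exact h.symm
    have hbound : ∀ᶠ n in atTop,
        ENNReal.ofReal (‖c n‖ ^ (1 / (n : ℝ))) ≤ ENNReal.ofReal (‖one‖ / R) := by
      filter_upwards [eventually_ge_atTop 1] with n hn
      have hn0 : (0 : ℝ) < n := by exact_mod_cast hn
      rw [hc n, norm_zero, Real.zero_rpow (one_div_ne_zero hn0.ne')]
      simp
    exact Filter.limsup_le_of_le (by isBoundedDefault) hbound
  · have honen : 0 < ‖one‖ := norm_pos_iff.mpr hone0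
    have hbpos : 0 < ‖one‖ / R := div_pos honen hR
    refine ENNReal.le_of_forall_pos_le_add (fun ε hε _ => ?_)
    have hεR : (0 : ℝ) < (ε : ℝ) := by exact_mod_cast hε
    set b : ℝ := ‖one‖ / R with hbdef
    set t : ℝ := 1 / (b + ε) with htdef
    have hbε : (0 : ℝ) < b + ε := by positivity
    have ht : 0 < t := by positivity
    -- the point z = z₀ + t • one is inside the disk
    have hz : ‖(z₀ + t • one) - z₀‖ < R := by
      have h1 : ‖(z₀ + t • one) - z₀‖ = t * ‖one‖ := by
        rw [add_sub_cancel_left, norm_smul, Real.norm_eq_abs, abs_of_pos ht]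
      rw [h1]
      have h2 : ‖one‖ / (b + ε) < ‖one‖ / b :=
        div_lt_div_of_pos_left honen hbpos (by linarith)
      have h3 : ‖one‖ / b = R := by
        rw [hbdef]; field_simp
      calc t * ‖one‖ = ‖one‖ / (b + ε) := by rw [htdef]; ring
        _ < ‖one‖ / b := h2
        _ = R := h3
    obtain ⟨S, hS⟩ := hconv (z₀ + t • one) hz
    -- powers of t • one
    have hpow : ∀ n, apow mul one (t • one) n = t ^ n • one := by
      intro n
      induction n with
      | zero => simp [apow]
      | succ k ih =>
        show mul (apow mul one (t • one) k) (t • one) = t ^ (k + 1) • one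
        rw [ih, map_smul, (hone (t ^ k • one)).2, smul_smul, ← pow_succ']
    have hterms : ∀ k, mul (c k) (apow mul one ((z₀ + t • one) - z₀) k)
        = t ^ k • c k := by
      intro k
      rw [add_sub_cancel_left, hpow k, (mul (c k)).map_smul, (hone (c k)).2]
    simp only [hterms] at hS
    -- terms tend to 0
    have hterm0 : Tendsto (fun k => t ^ k • c k) atTop (𝓝 (0 : A)) := by
      have h1 : Tendsto (fun n => (∑ k ∈ Finset.range (n + 1), t ^ k • c k)
          - ∑ k ∈ Finset.range n, t ^ k • c k) atTop (𝓝 (S - S)) :=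
        (hS.comp (tendsto_add_atTop_nat 1)).sub hS
      simp only [Finset.sum_range_succ, add_sub_cancel_left, sub_self] at h1
      exact h1
    have hev : ∀ᶠ k in atTop, ‖t ^ k • c k‖ < 1 :=
      NormedAddCommGroup.tendsto_nhds_zero.mp hterm0 1 one_pos
    have hbound : ∀ᶠ n in atTop,
        ENNReal.ofReal (‖c n‖ ^ (1 / (n : ℝ))) ≤ ENNReal.ofReal (1 / t) := by
      filter_upwards [hev, eventually_ge_atTop 1] with n h1 hn
      apply ENNReal.ofReal_le_ofReal
      have hn0 : (0 : ℝ) < n := by exact_mod_cast hn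
      have hpt : (0 : ℝ) < t ^ n := pow_pos ht n
      rw [norm_smul, Real.norm_eq_abs, abs_pow, abs_of_pos ht] at h1
      have hcb : ‖c n‖ ≤ t⁻¹ ^ n := by
        rw [inv_pow, ← one_div, le_div_iff₀ hpt]
        nlinarith [h1]
      calc ‖c n‖ ^ (1 / (n : ℝ)) ≤ (t⁻¹ ^ n) ^ (1 / (n : ℝ)) :=
            Real.rpow_le_rpow (norm_nonneg _) hcb (by positivity)
        _ = 1 / t := by
            rw [← Real.rpow_natCast t⁻¹ n, ← Real.rpow_mul (by positivity),
              mul_one_div, div_self hn0.ne', Real.rpow_one, one_div]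
    have hL := Filter.limsup_le_of_le (by isBoundedDefault) hbound
    have heq : ENNReal.ofReal (1 / t) = ENNReal.ofReal b + ε := by
      rw [htdef, one_div_one_div, ENNReal.ofReal_add hbpos.le (by positivity),
        ENNReal.ofReal_coe_nnreal]
    rwa [heq] at hL
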